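/- arXiv:2002.12136 — 2 statements merged into one kernel-verified Lean document; each statement's English description precedes it below -/
import Mathlib

section
/- Suppose z, v, w, x, y are Gaussian integers with v \ne 0 such that 4*(2*v*(2*(2z+1)^2+1) - y)^2 - 3*y^2 - 1 = 0 and w^2 - 1 - 3*y^2*(2z+1 - x*y)^2 = 0. Then z is a rational integer. -/
private lemma one_le_sq {a : ℤ} (h : a ≠ 0) : 1 ≤ a^2 := by
  have h2 : 0 < a^2 := by positivity
  linarith [Int.lt_iff_add_one_le.1 h2]

private lemma no_sq_two (b : ℤ) : b^2 ≠ 2 := by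
  intro h
  have h1 : 2*b ≤ 3 := by nlinarith [sq_nonneg (b-1)]
  have h2 : -3 ≤ 2*b := by nlinarith [sq_nonneg (b+1)]
  have hb1 : b ≤ 1 := by omega
  have hb2 : -1 ≤ b := by omega
  interval_cases b <;> norm_num at h

private lemma keyZ : ∀ n : ℕ, ∀ a b c d : ℤ, (c^2 + d^2).toNat ≤ n →
    a^2 - b^2 - 3*c^2 + 3*d^2 = 1 → a*b = 3*(c*d) → b = 0 ∧ d = 0 := by
  intro n
  induction n using Nat.strong_induction_on with
  | _ n ih =>
    intro a b c d hn h1 h2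
    by_cases hsmall : c^2 + d^2 ≤ 1
    · have hc1 : -1 ≤ c := by nlinarith [sq_nonneg d, sq_nonneg (c+1)]
      have hc2 : c ≤ 1 := by nlinarith [sq_nonneg d, sq_nonneg (c-1)]
      have hd1 : -1 ≤ d := by nlinarith [sq_nonneg c, sq_nonneg (d+1)]
      have hd2 : d ≤ 1 := by nlinarith [sq_nonneg c, sq_nonneg (d-1)]
      interval_cases c <;> interval_cases d <;>
        first
        | (exfalso; revert hsmall; norm_num; done)
        | (have hab : a*b = 0 := by linear_combination h2
           rcases mul_eq_zero.1 hab with ha | hb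
           · subst ha
             first
             | (exfalso; nlinarith [sq_nonneg b])
             | (exact absurd (by linear_combination -h1 : b^2 = 2) (no_sq_two b))
           · subst hb
             first
             | exact ⟨rfl, rfl⟩
             | (exfalso; nlinarith [sq_nonneg a]))
    · push_neg at hsmall
      have hN2 : 2 ≤ c^2 + d^2 := hsmall
      have hs1 : (2*a-3*c)^2 - (2*b-3*d)^2 - 3*(2*c-a)^2 + 3*(2*d-b)^2 = 1 := by
        linear_combination h1
      have hs2 : (2*a-3*c)*(2*b-3*d) = 3*((2*c-a)*(2*d-b)) := by linear_combination h2
      have hs1' : (2*a+3*c)^2 - (2*b+3*d)^2 - 3*(2*c+a)^2 + 3*(2*d+b)^2 = 1 := by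
        linear_combination h1
      have hs2' : (2*a+3*c)*(2*b+3*d) = 3*((2*c+a)*(2*d+b)) := by linear_combination h2
      have e1 : 4*c^2 - a^2 - 4*d^2 + b^2 = c^2 - d^2 - 1 := by linear_combination -h1
      have e2 : 8*(c*d) - 2*(a*b) = 2*(c*d) := by linear_combination -2*h2
      have hprod : ((2*c-a)^2 + (2*d-b)^2) * ((2*c+a)^2 + (2*d+b)^2)
          = (c^2+d^2+1)^2 - 4*c^2 := by
        linear_combination (4*c^2 - a^2 - 4*d^2 + b^2 + (c^2-d^2-1)) * e1
          + (8*(c*d) - 2*(a*b) + 2*(c*d)) * e2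
      have hsum : ((2*c-a)^2 + (2*d-b)^2) + ((2*c+a)^2 + (2*d+b)^2)
          = 8*(c^2+d^2) + 2*(a^2+b^2) := by ring
      have hmin : (2*c-a)^2 + (2*d-b)^2 < c^2 + d^2 ∨
          (2*c+a)^2 + (2*d+b)^2 < c^2 + d^2 := by
        by_contra hcon
        push_neg at hcon
        obtain ⟨hq, hq'⟩ := hcon
        nlinarith [mul_nonneg (sub_nonneg.2 hq) (sub_nonneg.2 hq'), sq_nonneg a, sq_nonneg b,
          sq_nonneg c, mul_nonneg (sub_nonneg.2 hN2) (add_nonneg (sq_nonneg c) (sq_nonneg d))]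
      have hnn : (0:ℤ) ≤ c^2 + d^2 := by positivity
      have hle : c^2 + d^2 ≤ n := by omega
      rcases hmin with h | h
      · have hnn2 : (0:ℤ) ≤ (2*c-a)^2 + (2*d-b)^2 := by positivity
        obtain ⟨hb, hd⟩ := ih (n-1) (by omega) (2*a-3*c) (2*b-3*d) (2*c-a) (2*d-b)
          (by omega) hs1 hs2
        constructor <;> omega
      · have hnn2 : (0:ℤ) ≤ (2*c+a)^2 + (2*d+b)^2 := by positivity
        obtain ⟨hb, hd⟩ := ih (n-1) (by omega) (2*a+3*c) (2*b+3*d) (2*c+a) (2*d+b)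
          (by omega) hs1' hs2'
        constructor <;> omega

private lemma pell_im (X Y : GaussianInt) (h : X^2 - 3*Y^2 = 1) : X.im = 0 ∧ Y.im = 0 := by
  have h' : X*X = 1 + (Y*Y + Y*Y + Y*Y) := by linear_combination h
  obtain ⟨hre, him⟩ := Zsqrtd.ext_iff.1 h'
  simp only [Zsqrtd.re_mul, Zsqrtd.im_mul, Zsqrtd.re_add, Zsqrtd.im_add, Zsqrtd.re_one,
    Zsqrtd.im_one] at hre him
  have e1 : X.re^2 - X.im^2 - 3*Y.re^2 + 3*Y.im^2 = 1 := by linear_combination hre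
  have e2 : X.re*X.im = 3*(Y.re*Y.im) := by
    have h2 : 2*(X.re*X.im) = 2*(3*(Y.re*Y.im)) := by linear_combination him
    exact mul_left_cancel₀ two_ne_zero h2
  exact keyZ (Y.re^2 + Y.im^2).toNat X.re X.im Y.re Y.im le_rfl e1 e2

private lemma pell_comp (X Y : GaussianInt) (h : X^2 - 3*Y^2 = 1) :
    X.im = 0 ∧ Y.im = 0 ∧ X.re^2 - 3*Y.re^2 = 1 := by
  obtain ⟨h1, h2⟩ := pell_im X Y h
  refine ⟨h1, h2, ?_⟩
  have h' : X*X = 1 + (Y*Y + Y*Y + Y*Y) := by linear_combination h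
  have hre := (Zsqrtd.ext_iff.1 h').1
  simp only [Zsqrtd.re_mul, Zsqrtd.re_add, Zsqrtd.re_one] at hre
  rw [h1, h2] at hre
  linear_combination hre

theorem stmt_8 (z v w x y : GaussianInt) (hv : v ≠ 0)
    (h1 : 4*(2*v*(2*(2*z+1)^2+1) - y)^2 - 3*y^2 - 1 = 0)
    (h2 : w^2 - 1 - 3*y^2*(2*z+1 - x*y)^2 = 0) :
    z.im = 0 := by
  obtain ⟨ζ, hζ⟩ : ∃ c : GaussianInt, z+z+1 = c := ⟨_, rfl⟩
  obtain ⟨T, hT⟩ : ∃ T : GaussianInt, 2*v*(2*(2*z+1)^2+1) - y = T := ⟨_, rfl⟩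
  -- first Pell equation
  have hA : (T+T)^2 - 3*y^2 = 1 := by rw [← hT]; linear_combination h1
  obtain ⟨hTim2, hyim, hTre2⟩ := pell_comp (T+T) y hA
  have hTim : T.im = 0 := by rw [Zsqrtd.im_add] at hTim2; omega
  have h4a : 4*T.re^2 - 3*y.re^2 = 1 := by
    rw [Zsqrtd.re_add] at hTre2; linear_combination hTre2
  -- y.re ≠ 0
  have hc0 : y.re ≠ 0 := by
    intro h0
    rw [h0] at h4a
    have hzz : (2*T.re - 1)*(2*T.re + 1) = 0 := by linear_combination h4a
    rcases mul_eq_zero.1 hzz with h | h <;> omega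
  -- second Pell equation
  have hB : w^2 - 3*(y*(ζ - x*y))^2 = 1 := by rw [← hζ]; linear_combination h2
  obtain ⟨-, hYim, -⟩ := pell_comp w (y*(ζ - x*y)) hB
  rw [Zsqrtd.im_mul, hyim] at hYim
  have hsub : (ζ - x*y).im = 0 := by
    rcases mul_eq_zero.1 (by linarith : y.re * (ζ - x*y).im = 0) with h | h
    · exact absurd h hc0
    · exact h
  rw [Zsqrtd.im_sub, Zsqrtd.im_mul, hyim] at hsub
  -- so ζ.im = x.im * y.re
  have htt : ζ.im = x.im * y.re := by linarith
  -- ζ components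
  have hζre : ζ.re = 2*z.re + 1 := by
    rw [← hζ]; simp [Zsqrtd.re_add, Zsqrtd.re_one]; ring
  have hζim : ζ.im = 2*z.im := by
    rw [← hζ]; simp [Zsqrtd.im_add, Zsqrtd.im_one]; ring
  -- norm equation
  have hE : T + y = (v+v)*(ζ*ζ + ζ*ζ + 1) := by rw [← hT, ← hζ]; ring
  have hnorm := congrArg Zsqrtd.norm hE
  rw [Zsqrtd.norm_mul] at hnorm
  simp only [Zsqrtd.norm_def, Zsqrtd.re_add, Zsqrtd.im_add, Zsqrtd.re_mul, Zsqrtd.im_mul,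
    Zsqrtd.re_one, Zsqrtd.im_one, hTim, hyim] at hnorm
  have hnorm2 : (T.re + y.re)^2
      = 4*(v.re^2 + v.im^2) * ((2*ζ.re^2 - 2*ζ.im^2 + 1)^2 + 16*ζ.re^2*ζ.im^2) := by
    linear_combination hnorm
  clear hnorm hE hB hYim hsub hA hTim2 hTre2 h1 h2 hT hζ
  -- v nonzero gives norm at least 1
  have hv1 : 1 ≤ v.re^2 + v.im^2 := by
    by_cases hre : v.re = 0
    · have him : v.im ≠ 0 := by
        intro him; exact hv (Zsqrtd.ext_iff.2 ⟨by simp [hre], by simp [him]⟩)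
      nlinarith [one_le_sq him, sq_nonneg v.re]
    · nlinarith [one_le_sq hre, sq_nonneg v.im]
  -- endgame
  by_contra hne
  have htt0 : ζ.im ≠ 0 := by rw [hζim]; omega
  have hxim : x.im ≠ 0 := by intro h; rw [h] at htt; simp at htt; exact htt0 htt
  have hx1 : 1 ≤ x.im^2 := one_le_sq hxim
  have hcc : 1 ≤ y.re^2 := one_le_sq hc0
  have htc : y.re^2 ≤ ζ.im^2 := by
    rw [htt]; nlinarith [mul_nonneg (sub_nonneg.2 hx1) (sq_nonneg y.re)]
  have hs1 : 1 ≤ ζ.re^2 := by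
    have hsne : ζ.re ≠ 0 := by rw [hζre]; omega
    exact one_le_sq hsne
  have hsum : (T.re + y.re)^2 ≤ 4*y.re^2 := by nlinarith [sq_nonneg (T.re - y.re)]
  have hPnn : (0:ℤ) ≤ (2*ζ.re^2 - 2*ζ.im^2 + 1)^2 + 16*ζ.re^2*ζ.im^2 := by positivity
  have hP1 : 4 * ((2*ζ.re^2 - 2*ζ.im^2 + 1)^2 + 16*ζ.re^2*ζ.im^2) ≤ (T.re + y.re)^2 := by
    nlinarith [mul_nonneg (sub_nonneg.2 hv1) hPnn]
  have hPC : (2*ζ.re^2 - 2*ζ.im^2 + 1)^2 + 16*ζ.re^2*ζ.im^2 ≤ y.re^2 := by linarith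
  have h16 : 16*ζ.im^2 ≤ 16*ζ.re^2*ζ.im^2 := by
    nlinarith [mul_nonneg (sub_nonneg.2 hs1) (sq_nonneg ζ.im)]
  nlinarith [sq_nonneg (2*ζ.re^2 - 2*ζ.im^2 + 1)]
end

section
/- Let u_n = u_n(4,1) and let k be an odd positive integer. Then for every positive integer n, u_n divides u_{kn}, and the quotient u_{kn}/u_n is congruent to k modulo u_n. -/
def lucasU (A B : ℤ) : ℕ → ℤ
  | 0 => 0
  | 1 => 1
  | (n+2) => A * lucasU A B (n+1) - B * lucasU A B n

lemma lucasU_ss (n : ℕ) :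
    lucasU 4 1 (n+2) = 4 * lucasU 4 1 (n+1) - lucasU 4 1 n := by
  rw [lucasU]; ring

lemma lucasU_pos : ∀ n : ℕ, 0 ≤ lucasU 4 1 n ∧ lucasU 4 1 n < lucasU 4 1 (n+1)
  | 0 => by norm_num [lucasU]
  | (n+1) => by
    obtain ⟨h0, h1⟩ := lucasU_pos n
    rw [lucasU_ss]
    constructor <;> linarith

lemma lucasU_id (n : ℕ) :
    lucasU 4 1 (n+1)^2 + lucasU 4 1 n ^ 2 - 4 * lucasU 4 1 (n+1) * lucasU 4 1 n = 1 := by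
  induction n with
  | zero => norm_num [lucasU]
  | succ n ih =>
    rw [lucasU_ss]
    linear_combination ih

lemma lucasU_add : ∀ m n : ℕ, lucasU 4 1 (m+n+1) =
    lucasU 4 1 (m+1) * lucasU 4 1 (n+1) - lucasU 4 1 m * lucasU 4 1 n
  | 0, n => by simp [lucasU]
  | 1, n => by
    have e : 1 + n + 1 = n + 2 := by ring
    rw [e, lucasU_ss]
    norm_num [lucasU]
  | (m+2), n => by
    have h1 := lucasU_add (m+1) n
    have h2 := lucasU_add m n
    have e : m+2+n+1 = (m+n+1)+2 := by ring
    have e1 : m+n+1+1 = m+1+n+1 := by ring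
    have e2 : m+2+1 = (m+1)+2 := by ring
    rw [e, lucasU_ss, e1, h1, h2, e2, lucasU_ss (m+1), lucasU_ss m]
    ring

lemma lucasU_sq (n : ℕ) :
    lucasU 4 1 (n+1) ^ 2 ≡ 1 [ZMOD lucasU 4 1 n] := by
  have h := lucasU_id n
  have : lucasU 4 1 n ∣ 1 - lucasU 4 1 (n+1) ^ 2 :=
    ⟨lucasU 4 1 n - 4 * lucasU 4 1 (n+1), by linear_combination -h⟩
  exact (Int.modEq_iff_dvd.mpr this)

lemma key (m : ℕ) : ∀ j : ℕ,
    (∃ c, lucasU 4 1 (j*(m+1)) = lucasU 4 1 (m+1) * c ∧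
       c ≡ (j : ℤ) * lucasU 4 1 (m+2) ^ (j+1) [ZMOD lucasU 4 1 (m+1)]) ∧
    lucasU 4 1 (j*(m+1)+1) ≡ lucasU 4 1 (m+2) ^ j [ZMOD lucasU 4 1 (m+1)] := by
  have hsq : lucasU 4 1 (m+2) ^ 2 ≡ 1 [ZMOD lucasU 4 1 (m+1)] := lucasU_sq (m+1)
  have hum : lucasU 4 1 m ≡ -lucasU 4 1 (m+2) [ZMOD lucasU 4 1 (m+1)] := by
    have h := lucasU_ss m
    exact Int.modEq_iff_dvd.mpr ⟨-4, by linear_combination -h⟩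
  intro j
  induction j with
  | zero =>
    constructor
    · exact ⟨0, by norm_num [lucasU], by norm_num [lucasU]⟩
    · norm_num [lucasU]
  | succ j ih =>
    obtain ⟨⟨c, hc, hcmod⟩, hmod1⟩ := ih
    have eadd : (j+1)*(m+1) = j*(m+1) + m + 1 := by ring
    have hstep : lucasU 4 1 ((j+1)*(m+1)) =
        lucasU 4 1 (j*(m+1)+1) * lucasU 4 1 (m+1) - lucasU 4 1 (j*(m+1)) * lucasU 4 1 m := by
      rw [eadd, lucasU_add (j*(m+1)) m]
    have hstep1 : lucasU 4 1 ((j+1)*(m+1) + 1) =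
        lucasU 4 1 (j*(m+1)+1) * lucasU 4 1 (m+2) - lucasU 4 1 (j*(m+1)) * lucasU 4 1 (m+1) := by
      have e : (j+1)*(m+1)+1 = j*(m+1) + (m+1) + 1 := by ring
      rw [e, lucasU_add (j*(m+1)) (m+1)]
    constructor
    · refine ⟨lucasU 4 1 (j*(m+1)+1) - c * lucasU 4 1 m, ?_, ?_⟩
      · rw [hstep, hc]; ring
      · have h1 : lucasU 4 1 (j*(m+1)+1) - c * lucasU 4 1 m ≡
            lucasU 4 1 (m+2)^j - ((j:ℤ) * lucasU 4 1 (m+2)^(j+1)) * (-lucasU 4 1 (m+2))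
            [ZMOD lucasU 4 1 (m+1)] :=
          Int.ModEq.sub hmod1 (Int.ModEq.mul hcmod hum)
        refine h1.trans ?_
        have h2 : lucasU 4 1 (m+2)^j - ((j:ℤ) * lucasU 4 1 (m+2)^(j+1)) * (-lucasU 4 1 (m+2))
            = lucasU 4 1 (m+2)^j + (j:ℤ) * lucasU 4 1 (m+2)^j * lucasU 4 1 (m+2)^2 := by ring
        rw [h2]
        calc lucasU 4 1 (m+2)^j + (j:ℤ) * lucasU 4 1 (m+2)^j * lucasU 4 1 (m+2)^2
            ≡ lucasU 4 1 (m+2)^j + (j:ℤ) * lucasU 4 1 (m+2)^j * 1 [ZMOD lucasU 4 1 (m+1)] :=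
              Int.ModEq.add_left _ (Int.ModEq.mul_left _ hsq)
          _ = ((j:ℤ)+1) * lucasU 4 1 (m+2)^j * 1 := by ring
          _ ≡ ((j:ℤ)+1) * lucasU 4 1 (m+2)^j * (lucasU 4 1 (m+2)^2) [ZMOD lucasU 4 1 (m+1)] :=
              Int.ModEq.mul_left _ hsq.symm
          _ = ((j:ℕ)+1 : ℤ) * lucasU 4 1 (m+2)^(j+1+1) := by push_cast; ring
    · rw [hstep1, hc]
      have h1 : lucasU 4 1 (j*(m+1)+1) * lucasU 4 1 (m+2) - (lucasU 4 1 (m+1) * c) * lucasU 4 1 (m+1)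
          ≡ lucasU 4 1 (m+2)^j * lucasU 4 1 (m+2) - 0 [ZMOD lucasU 4 1 (m+1)] := by
        refine Int.ModEq.sub (Int.ModEq.mul_right _ hmod1) ?_
        exact Int.modEq_iff_dvd.mpr ⟨-c * lucasU 4 1 (m+1), by ring⟩
      simpa [pow_succ] using h1

theorem stmt_12 (k : ℕ) (hk : Odd k) (hk0 : 0 < k) (n : ℕ) (hn : 0 < n) :
    lucasU 4 1 n ∣ lucasU 4 1 (k*n) ∧
      lucasU 4 1 (k*n) / lucasU 4 1 n ≡ (k : ℤ) [ZMOD lucasU 4 1 n] := by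
  obtain ⟨m, rfl⟩ : ∃ m, n = m + 1 := ⟨n - 1, by omega⟩
  obtain ⟨⟨c, hc, hcmod⟩, -⟩ := key m k
  have hpos : 0 < lucasU 4 1 (m+1) := lt_of_le_of_lt (lucasU_pos m).1 (lucasU_pos m).2
  refine ⟨⟨c, hc⟩, ?_⟩
  rw [hc, Int.mul_ediv_cancel_left _ hpos.ne']
  refine hcmod.trans ?_
  obtain ⟨t, ht⟩ := hk
  have e : k + 1 = 2 * (t + 1) := by omega
  have hx : lucasU 4 1 (m+2) ^ (k+1) ≡ 1 [ZMOD lucasU 4 1 (m+1)] := by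
    rw [e, pow_mul]
    calc (lucasU 4 1 (m+2) ^ 2) ^ (t+1) ≡ 1 ^ (t+1) [ZMOD lucasU 4 1 (m+1)] :=
          (lucasU_sq (m+1)).pow _
      _ = 1 := one_pow _
  calc (k:ℤ) * lucasU 4 1 (m+2) ^ (k+1) ≡ (k:ℤ) * 1 [ZMOD lucasU 4 1 (m+1)] :=
        Int.ModEq.mul_left _ hx
    _ = (k:ℤ) := mul_one _
end
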